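/- Let X be a directed space. Then the map η : X → X̃ defined by η(x) = cl{x} is a topological embedding of X into X̃ equipped with the Scott topology; moreover for every closed A ⊆ X, η(A) = η(X) ∩ cl_{X̃}(η(A)). -/

import Mathlib

open Set Topology

variable {X : Type*} [TopologicalSpace X]

/-- The specialization order of the paper: `x ⊑ y` iff `x ∈ cl {y}`. -/
def specLe (x y : X) : Prop := x ∈ closure {y}

/-- A directed set `D` converges to `x` iff it meets every open neighborhood of `x`. -/
def DConv (D : Set X) (x : X) : Prop :=
  ∀ U : Set X, IsOpen U → x ∈ U → (D ∩ U).Nonempty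

/-- `U` is directed-open. -/
def DirOpen (U : Set X) : Prop :=
  ∀ (D : Set X) (x : X), D.Nonempty → DirectedOn specLe D → DConv D x → x ∈ U →
    (D ∩ U).Nonempty

/-- `X̃` as a set: the least subfamily of `Γ(X)` (nonempty closed sets, ordered by
inclusion, with directed suprema given by closures of unions) containing all point
closures and closed under directed suprema, i.e. the d-closure of `Ψ(X)` in `Γ(X)`. -/
def XtildeSet (X : Type*) [TopologicalSpace X] : Set (Set X) :=
  ⋂₀ {S : Set (Set X) | S ⊆ {A | IsClosed A ∧ A.Nonempty} ∧
      (∀ x : X, closure {x} ∈ S) ∧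
      ∀ 𝒟 ⊆ S, 𝒟.Nonempty → DirectedOn (· ⊆ ·) 𝒟 → closure (⋃₀ 𝒟) ∈ S}

/-- The dcpo `X̃`, ordered by inclusion. -/
abbrev Xtilde (X : Type*) [TopologicalSpace X] := {A : Set X // A ∈ XtildeSet X}

/-- A Scott open subset of the dcpo `X̃`. -/
def ScottOpen (V : Set (Xtilde X)) : Prop :=
  IsUpperSet V ∧ ∀ d : Set (Xtilde X), d.Nonempty → DirectedOn (· ≤ ·) d →
    ∀ a : Xtilde X, IsLUB d a → a ∈ V → (d ∩ V).Nonempty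

/-- The unit `η : X → X̃`, `η x = cl {x}`. -/
def eta (x : X) : Xtilde X :=
  ⟨closure {x}, fun _ hS => hS.2.1 x⟩

/-- The full family of nonempty closed sets satisfies the defining closure properties. -/
lemma gamma_mem : {A : Set X | IsClosed A ∧ A.Nonempty} ∈
    {S : Set (Set X) | S ⊆ {A | IsClosed A ∧ A.Nonempty} ∧
      (∀ x : X, closure {x} ∈ S) ∧
      ∀ 𝒟 ⊆ S, 𝒟.Nonempty → DirectedOn (· ⊆ ·) 𝒟 → closure (⋃₀ 𝒟) ∈ S} := by
  refine ⟨subset_rfl, fun x => ⟨isClosed_closure, ⟨x, subset_closure rfl⟩⟩, ?_⟩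
  rintro 𝒟 h𝒟 ⟨D, hD⟩ -
  refine ⟨isClosed_closure, ?_⟩
  obtain ⟨z, hz⟩ := (h𝒟 hD).2
  exact ⟨z, subset_closure ⟨D, hD, hz⟩⟩

lemma mem_XtildeSet_closed {A : Set X} (h : A ∈ XtildeSet X) : IsClosed A ∧ A.Nonempty :=
  h _ gamma_mem

lemma sUnion_mem_XtildeSet {𝒟 : Set (Set X)} (h : 𝒟 ⊆ XtildeSet X) (hne : 𝒟.Nonempty)
    (hdir : DirectedOn (· ⊆ ·) 𝒟) : closure (⋃₀ 𝒟) ∈ XtildeSet X := by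
  intro S hS
  exact hS.2.2 𝒟 (fun D hD => h hD S hS) hne hdir

lemma xtilde_le_iff {a b : Xtilde X} : a ≤ b ↔ a.1 ⊆ b.1 := Iff.rfl

/-- The canonical directed supremum in `X̃`. -/
lemma isLUB_xtilde {d : Set (Xtilde X)} (h : closure (⋃₀ (Subtype.val '' d)) ∈ XtildeSet X) :
    IsLUB d (⟨closure (⋃₀ (Subtype.val '' d)), h⟩ : Xtilde X) := by
  constructor
  · intro b hb
    show b.1 ⊆ closure (⋃₀ (Subtype.val '' d))
    exact fun z hz => subset_closure ⟨b.1, ⟨b, hb, rfl⟩, hz⟩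
  · intro u hu
    have hcl : IsClosed u.1 := (mem_XtildeSet_closed u.2).1
    show closure (⋃₀ (Subtype.val '' d)) ⊆ u.1
    refine closure_minimal ?_ hcl
    rintro z ⟨B, ⟨b, hb, rfl⟩, hz⟩
    exact hu hb hz

lemma image_directed {d : Set (Xtilde X)} (hdir : DirectedOn (· ≤ ·) d) :
    DirectedOn (· ⊆ ·) (Subtype.val '' d) := by
  rintro _ ⟨a, ha, rfl⟩ _ ⟨b, hb, rfl⟩
  obtain ⟨c, hc, hac, hbc⟩ := hdir a ha b hb
  exact ⟨c.1, ⟨c, hc, rfl⟩, hac, hbc⟩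

lemma lub_eq {d : Set (Xtilde X)} (hne : d.Nonempty) (hdir : DirectedOn (· ≤ ·) d)
    {a : Xtilde X} (ha : IsLUB d a) : a.1 = closure (⋃₀ (Subtype.val '' d)) := by
  have hmem := sUnion_mem_XtildeSet (𝒟 := Subtype.val '' d)
    (by rintro _ ⟨b, hb, rfl⟩; exact b.2) (hne.image _) (image_directed hdir)
  have := ha.unique (isLUB_xtilde hmem)
  exact congrArg Subtype.val this

/-- For `U` open, `Ũ = {B ∈ X̃ : B ∩ U ≠ ∅}` is Scott open. -/
lemma utilde_isOpen (U : Set X) (hU : IsOpen U) :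
    IsOpen[Topology.scott (Xtilde X) Set.univ] {B : Xtilde X | (B.1 ∩ U).Nonempty} := by
  letI : TopologicalSpace (Xtilde X) := Topology.scott (Xtilde X) Set.univ
  haveI : Topology.IsScott (Xtilde X) Set.univ := ⟨rfl⟩
  rw [Topology.IsScott.isOpen_iff_isUpperSet_and_dirSupInaccOn (D := Set.univ)]
  constructor
  · intro a b hab ⟨z, hz, hzU⟩
    exact ⟨z, hab hz, hzU⟩
  · rintro d - hne hdir a hlub ⟨z, hz, hzU⟩
    rw [lub_eq hne hdir hlub] at hz
    rw [mem_closure_iff] at hz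
    obtain ⟨w, hwU, hws⟩ := hz U hU hzU
    obtain ⟨B, ⟨b, hb, rfl⟩, hwB⟩ := hws
    exact ⟨b, hb, ⟨w, hwB, hwU⟩⟩

lemma mem_closure_singleton_inter {U : Set X} (hU : IsOpen U) (x : X) :
    (closure {x} ∩ U).Nonempty ↔ x ∈ U := by
  constructor
  · rintro ⟨y, hy, hyU⟩
    rw [mem_closure_iff] at hy
    obtain ⟨z, hzU, rfl⟩ := hy U hU hyU
    exact hzU
  · intro hx
    exact ⟨x, subset_closure rfl, hx⟩

lemma eta_mono {x y : X} (h : specLe x y) : eta x ≤ eta y :=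
  closure_minimal (singleton_subset_iff.2 h) isClosed_closure

/-- For a directed space `X`, `η : X → X̃` (with `X̃` carrying the Scott topology) is a
topological embedding, and for every closed `A ⊆ X`, `η(A) = η(X) ∩ cl_{X̃}(η(A))`. -/
theorem stmt_14 [T0Space X] (hX : ∀ U : Set X, DirOpen U → IsOpen U) :
    @Topology.IsEmbedding X (Xtilde X) _ (Topology.scott (Xtilde X) Set.univ)
      (eta : X → Xtilde X) ∧
    ∀ A : Set X, IsClosed A →
      eta '' A = Set.range (eta : X → Xtilde X) ∩
        @closure (Xtilde X) (Topology.scott (Xtilde X) Set.univ) (eta '' A) := by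
  letI tS : TopologicalSpace (Xtilde X) := Topology.scott (Xtilde X) Set.univ
  haveI : Topology.IsScott (Xtilde X) Set.univ := ⟨rfl⟩
  -- preimage of any Scott open is open in X
  have hcont : ∀ V : Set (Xtilde X), IsOpen V → IsOpen (eta ⁻¹' V) := by
    intro V hV
    apply hX
    intro D x hDne hDdir hconv hxV
    -- the image family
    set e : Set (Xtilde X) := eta '' D with he
    have hene : e.Nonempty := hDne.image _
    have hedir : DirectedOn (· ≤ ·) e := by
      rintro _ ⟨a, ha, rfl⟩ _ ⟨b, hb, rfl⟩
      obtain ⟨c, hc, hac, hbc⟩ := hDdir a ha b hb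
      exact ⟨eta c, ⟨c, hc, rfl⟩, eta_mono hac, eta_mono hbc⟩
    have hmem : closure (⋃₀ (Subtype.val '' e)) ∈ XtildeSet X :=
      sUnion_mem_XtildeSet (by rintro _ ⟨b, hb, rfl⟩; exact b.2) (hene.image _)
        (image_directed hedir)
    set A : Xtilde X := ⟨closure (⋃₀ (Subtype.val '' e)), hmem⟩ with hA
    have hlub : IsLUB e A := isLUB_xtilde hmem
    -- `closure (⋃₀ ...) = closure D`
    have hDsub : D ⊆ ⋃₀ (Subtype.val '' e) := by
      intro d hd
      exact ⟨closure {d}, ⟨eta d, ⟨d, hd, rfl⟩, rfl⟩, subset_closure rfl⟩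
    have hsubD : ⋃₀ (Subtype.val '' e) ⊆ closure D := by
      rintro z ⟨_, ⟨_, ⟨d, hd, rfl⟩, rfl⟩, hz⟩
      exact closure_mono (singleton_subset_iff.2 hd) hz
    have hclA : A.1 = closure D := by
      refine subset_antisymm ?_ (closure_mono hDsub)
      exact (closure_mono hsubD).trans closure_closure.subset
    -- `eta x ≤ A`
    have hxA : eta x ≤ A := by
      rw [xtilde_le_iff, hclA]
      refine closure_minimal (singleton_subset_iff.2 ?_) isClosed_closure
      rw [mem_closure_iff]
      intro o ho hxo
      obtain ⟨z, hz, hzo⟩ := hconv o ho hxo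
      exact ⟨z, hzo, hz⟩
    have hAV : A ∈ V := (Topology.IsScott.isUpperSet_of_isOpen (D := Set.univ) hV) hxA hxV
    have hdsi := (Topology.IsScott.isOpen_iff_isUpperSet_and_dirSupInaccOn
      (D := Set.univ)).1 hV |>.2
    obtain ⟨b, hb, hbV⟩ := hdsi (mem_univ e) hene hedir hlub hAV
    obtain ⟨d, hd, rfl⟩ := hb
    exact ⟨d, hd, hbV⟩
  have hinj : Function.Injective (eta : X → Xtilde X) := by
    intro x y hxy
    have : closure ({x} : Set X) = closure {y} := congrArg Subtype.val hxy
    exact (inseparable_iff_closure_eq.2 this).eq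
  constructor
  · refine ⟨⟨?_⟩, hinj⟩
    refine TopologicalSpace.ext_iff.2 fun U => ?_
    rw [isOpen_induced_iff]
    constructor
    · intro hU
      refine ⟨{B : Xtilde X | (B.1 ∩ U).Nonempty}, utilde_isOpen U hU, ?_⟩
      ext x
      exact mem_closure_singleton_inter hU x
    · rintro ⟨V, hV, rfl⟩
      exact hcont V hV
  · intro A hA
    refine subset_antisymm (subset_inter (image_subset_range _ _) subset_closure) ?_
    rintro _ ⟨⟨x, rfl⟩, hcl⟩
    by_contra hx
    have hxA : x ∉ A := fun h => hx ⟨x, h, rfl⟩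
    have hopen := utilde_isOpen Aᶜ hA.isOpen_compl
    have hmemU : eta x ∈ {B : Xtilde X | (B.1 ∩ Aᶜ).Nonempty} :=
      ⟨x, subset_closure rfl, hxA⟩
    rw [mem_closure_iff] at hcl
    obtain ⟨B, hBo, ⟨a, haA, rfl⟩⟩ := hcl _ hopen hmemU
    obtain ⟨z, hz, hzA⟩ := hBo
    exact hzA (closure_minimal (singleton_subset_iff.2 haA) hA hz)
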